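/- arXiv:2604.14438 — 2 statements merged into one kernel-verified Lean document; each statement's English description precedes it below -/
import Mathlib

section
/- For any f in H¹ of the one-dimensional torus, ‖f‖_∞² ≤ ‖f‖_2² + 2 ‖f‖_2 ‖f'‖_2 (Gagliardo–Nirenberg inequality on the torus). -/
open Real MeasureTheory intervalIntegral

/-- Gagliardo–Nirenberg inequality on the one-dimensional torus (1-periodic functions):
`‖f‖_∞² ≤ ‖f‖_2² + 2 ‖f‖_2 ‖f'‖_2`, stated pointwise: `(f x)² ≤ ∫ f² + 2 √(∫ f²) √(∫ f'²)`. -/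
theorem stmt_3 (f f' : ℝ → ℝ)
    (hper : Function.Periodic f 1)
    (hderiv : ∀ x, HasDerivAt f (f' x) x)
    (hf'cont : Continuous f') :
    ∀ x : ℝ, (f x) ^ 2 ≤
      (∫ y in (0:ℝ)..1, (f y) ^ 2) +
        2 * Real.sqrt (∫ y in (0:ℝ)..1, (f y) ^ 2) *
          Real.sqrt (∫ y in (0:ℝ)..1, (f' y) ^ 2) := by
  have hfc : Continuous f := by
    rw [continuous_iff_continuousAt]
    exact fun x => (hderiv x).continuousAt
  set A := ∫ y in (0:ℝ)..1, (f y) ^ 2 with hA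
  set B := ∫ y in (0:ℝ)..1, (f' y) ^ 2 with hB
  have hAnn : 0 ≤ A := intervalIntegral.integral_nonneg zero_le_one (fun u _ => sq_nonneg _)
  have hBnn : 0 ≤ B := intervalIntegral.integral_nonneg zero_le_one (fun u _ => sq_nonneg _)
  -- Cauchy–Schwarz
  have hCS : (∫ t in (0:ℝ)..1, |f t| * |f' t|) ≤ Real.sqrt A * Real.sqrt B := by
    rw [intervalIntegral.integral_of_le zero_le_one]
    set μ := volume.restrict (Set.Ioc (0:ℝ) 1) with hμ
    have hfin : IsFiniteMeasure μ := ⟨by simp [hμ, Real.volume_Ioc]⟩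
    have hmem : ∀ g : ℝ → ℝ, Continuous g →
        MemLp (fun t => |g t|) (ENNReal.ofReal 2) μ := by
      intro g hg
      obtain ⟨C, hC⟩ := isCompact_Icc.exists_bound_of_continuousOn
        (hg.continuousOn : ContinuousOn g (Set.Icc (0:ℝ) 1))
      refine MemLp.of_bound (hg.abs.aestronglyMeasurable) C ?_
      have : ∀ᵐ t ∂μ, t ∈ Set.Ioc (0:ℝ) 1 :=
        ae_restrict_mem measurableSet_Ioc
      filter_upwards [this] with t ht
      have := hC t (Set.Ioc_subset_Icc_self ht)
      simpa [Real.norm_eq_abs, abs_abs] using this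
    have hconj : (2:ℝ).HolderConjugate 2 := Real.holderConjugate_iff.mpr ⟨one_lt_two, by norm_num⟩
    have := MeasureTheory.integral_mul_le_Lp_mul_Lq_of_nonneg (μ := μ) hconj
      (f := fun t => |f t|) (g := fun t => |f' t|)
      (Filter.Eventually.of_forall fun t => abs_nonneg _)
      (Filter.Eventually.of_forall fun t => abs_nonneg _)
      (hmem f hfc) (hmem f' hf'cont)
    have hfe : (∫ a, |f a| ^ (2:ℝ) ∂μ) = A := by
      rw [hA, intervalIntegral.integral_of_le zero_le_one]
      refine integral_congr_ae (Filter.Eventually.of_forall fun t => ?_)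
      show |f t| ^ (2:ℝ) = f t ^ 2
      rw [show ((2:ℝ) = ((2:ℕ):ℝ)) by norm_num, Real.rpow_natCast, sq_abs]
    have hf'e : (∫ a, |f' a| ^ (2:ℝ) ∂μ) = B := by
      rw [hB, intervalIntegral.integral_of_le zero_le_one]
      refine integral_congr_ae (Filter.Eventually.of_forall fun t => ?_)
      show |f' t| ^ (2:ℝ) = f' t ^ 2
      rw [show ((2:ℝ) = ((2:ℕ):ℝ)) by norm_num, Real.rpow_natCast, sq_abs]
    rw [hfe, hf'e] at this
    calc (∫ t in Set.Ioc (0:ℝ) 1, |f t| * |f' t|) ≤ A ^ (1/(2:ℝ)) * B ^ (1/(2:ℝ)) := this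
      _ = Real.sqrt A * Real.sqrt B := by
          rw [Real.sqrt_eq_rpow, Real.sqrt_eq_rpow]
  -- integrability facts
  have hint2 : IntervalIntegrable (fun y => f y ^ 2) volume 0 1 :=
    ((hfc.pow 2).intervalIntegrable 0 1)
  have hintff' : ∀ a b : ℝ, IntervalIntegrable (fun t => 2 * f t * f' t) volume a b :=
    fun a b => (((continuous_const.mul hfc).mul hf'cont).intervalIntegrable a b)
  -- FTC
  have hFTC : ∀ a b : ℝ, (∫ t in a..b, 2 * f t * f' t) = f b ^ 2 - f a ^ 2 := by
    intro a b
    have hd : ∀ t ∈ Set.uIcc a b, HasDerivAt (fun y => f y ^ 2) (2 * f t * f' t) t := by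
      intro t _
      simpa [mul_comm, mul_assoc, mul_left_comm] using (hderiv t).fun_pow 2
    exact intervalIntegral.integral_eq_sub_of_hasDerivAt hd (hintff' a b)
  -- minimum point of f² on [0,1]
  obtain ⟨y₀, hy₀, hmin⟩ := isCompact_Icc.exists_isMinOn (Set.nonempty_Icc.2 zero_le_one)
    ((hfc.pow 2).continuousOn : ContinuousOn (fun y => f y ^ 2) (Set.Icc (0:ℝ) 1))
  have hminA : f y₀ ^ 2 ≤ A := by
    have h1 : (∫ y in (0:ℝ)..1, f y₀ ^ 2) ≤ A :=
      intervalIntegral.integral_mono_on zero_le_one intervalIntegrable_const hint2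
        (fun y hy => hmin hy)
    simpa using h1
  intro x
  -- reduce to the fundamental domain via periodicity
  have hx1 : f x = f (Int.fract x) := by
    have := hper.sub_int_mul_eq (x := x) ⌊x⌋
    rw [Int.fract]
    simpa using this.symm
  set z := Int.fract x with hz'
  have hz0 : (0:ℝ) ≤ z := Int.fract_nonneg x
  have hz1 : z ≤ 1 := (Int.fract_lt_one x).le
  rw [hx1]
  have key : f z ^ 2 = f y₀ ^ 2 + ∫ t in y₀..z, 2 * f t * f' t := by
    rw [hFTC]; ring
  have habs : |∫ t in y₀..z, 2 * f t * f' t| ≤ ∫ t in (0:ℝ)..1, |2 * f t * f' t| := by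
    have hintabs : IntervalIntegrable (fun t => |2 * f t * f' t|) volume 0 1 :=
      (((continuous_const.mul hfc).mul hf'cont).abs.intervalIntegrable 0 1)
    rcases le_total y₀ z with h | h
    · calc |∫ t in y₀..z, 2 * f t * f' t| ≤ ∫ t in y₀..z, |2 * f t * f' t| :=
            intervalIntegral.abs_integral_le_integral_abs h
        _ ≤ ∫ t in (0:ℝ)..1, |2 * f t * f' t| :=
            intervalIntegral.integral_mono_interval hy₀.1 h hz1
              (Filter.Eventually.of_forall fun t => abs_nonneg _) hintabs
    · rw [intervalIntegral.integral_symm, abs_neg]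
      calc |∫ t in z..y₀, 2 * f t * f' t| ≤ ∫ t in z..y₀, |2 * f t * f' t| :=
            intervalIntegral.abs_integral_le_integral_abs h
        _ ≤ ∫ t in (0:ℝ)..1, |2 * f t * f' t| :=
            intervalIntegral.integral_mono_interval hz0 h hy₀.2
              (Filter.Eventually.of_forall fun t => abs_nonneg _) hintabs
  have habs2 : (∫ t in (0:ℝ)..1, |2 * f t * f' t|) = 2 * ∫ t in (0:ℝ)..1, |f t| * |f' t| := by
    rw [← intervalIntegral.integral_const_mul]
    refine intervalIntegral.integral_congr fun t _ => ?_
    rw [abs_mul, abs_mul, abs_two]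
    ring
  calc f z ^ 2 = f y₀ ^ 2 + ∫ t in y₀..z, 2 * f t * f' t := key
    _ ≤ A + |∫ t in y₀..z, 2 * f t * f' t| :=
        add_le_add hminA (le_abs_self _)
    _ ≤ A + 2 * ∫ t in (0:ℝ)..1, |f t| * |f' t| := by
        rw [← habs2]; exact add_le_add le_rfl habs
    _ ≤ A + 2 * (Real.sqrt A * Real.sqrt B) := by
        have := mul_le_mul_of_nonneg_left hCS (by norm_num : (0:ℝ) ≤ 2)
        linarith
    _ = A + 2 * Real.sqrt A * Real.sqrt B := by ring
end

section
/- Let f ∈ H¹(𝕋) and suppose ρ : 𝕋 → ℝ is measurable with 0 < ρ ≤ ρ̄ a.e., u ∈ L²(𝕋), and ∫₀¹ ρ u² / 2 ≤ E. Then for every η > 0 there exists C_η > 0 depending only on η, ρ̄, E (one can take C_η = E/η + 54 ρ̄ E²/η³) such that ∫₀¹ |u f ∂_x f| ≤ η ∫₀¹ (∂_x f)²/ρ + C_η ∫₀¹ f². -/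
open Real MeasureTheory intervalIntegral


private lemma amgm4 (a b r t : ℝ) (hr : 0 < r) (ht : 0 < t) :
    |a * b| ≤ t / 2 * (a ^ 2 / r) + 1 / (2 * t) * (r * b ^ 2) := by
  have key : |a * b| * (2 * t * r) ≤ t ^ 2 * a ^ 2 + r ^ 2 * b ^ 2 := by
    rw [abs_mul]
    nlinarith [sq_nonneg (t * |a| - r * |b|), sq_abs a, sq_abs b]
  have h2 : t / 2 * (a ^ 2 / r) + 1 / (2 * t) * (r * b ^ 2)
      = (t ^ 2 * a ^ 2 + r ^ 2 * b ^ 2) / (2 * t * r) := by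
    field_simp
  rw [h2, le_div_iff₀ (by positivity)]
  linarith

/-- Lemma (GN): for `f ∈ H¹(𝕋)` (here a `C¹` 1-periodic function), `ρ` measurable with
`0 < ρ ≤ ρ̄` a.e., `u ∈ L²` with `∫ ρ u²/2 ≤ E`, one has for every `η > 0`
`∫ |u f f'| ≤ η ∫ f'²/ρ + C_η ∫ f²` with `C_η = E/η + 54 ρ̄ E²/η³`. -/
theorem stmt_4 (f f' ρ u : ℝ → ℝ) (ρbar E : ℝ)
    (hper : Function.Periodic f 1)
    (hderiv : ∀ x, HasDerivAt f (f' x) x) (hf'cont : Continuous f')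
    (hρmeas : Measurable ρ)
    (hρ : ∀ᵐ x ∂(volume.restrict (Set.Ioc (0:ℝ) 1)), 0 < ρ x ∧ ρ x ≤ ρbar)
    (humeas : Measurable u)
    (huL2 : IntervalIntegrable (fun x => ρ x * u x ^ 2) volume 0 1)
    (hE : (∫ x in (0:ℝ)..1, ρ x * u x ^ 2 / 2) ≤ E)
    (hint1 : IntervalIntegrable (fun x => |u x * f x * f' x|) volume 0 1)
    (hint2 : IntervalIntegrable (fun x => (f' x) ^ 2 / ρ x) volume 0 1) :
    ∀ η > 0,
      (∫ x in (0:ℝ)..1, |u x * f x * f' x|) ≤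
        η * (∫ x in (0:ℝ)..1, (f' x) ^ 2 / ρ x) +
          (E / η + 54 * ρbar * E ^ 2 / η ^ 3) * (∫ x in (0:ℝ)..1, (f x) ^ 2) := by
  intro η hη
  have h01 : (0:ℝ) ≤ 1 := by norm_num
  have hfc : Continuous f := by
    rw [continuous_iff_continuousAt]; exact fun x => (hderiv x).continuousAt
  have hρIcc : ∀ᵐ x ∂(volume.restrict (Set.Icc (0:ℝ) 1)), 0 < ρ x ∧ ρ x ≤ ρbar := by
    rwa [← MeasureTheory.restrict_Ioc_eq_restrict_Icc]
  have hρbar : 0 < ρbar := by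
    have hne : volume.restrict (Set.Ioc (0:ℝ) 1) ≠ 0 := by
      rw [Ne, Measure.restrict_eq_zero]
      simp
    have := @Filter.Eventually.exists _ _ _ (ae_neBot.mpr hne) hρ
    obtain ⟨x, hx1, hx2⟩ := this
    linarith
  set DD := ∫ x in (0:ℝ)..1, f' x ^ 2 / ρ x with hDDdef
  set FF := ∫ x in (0:ℝ)..1, f x ^ 2 with hFFdef
  set KK := ∫ x in (0:ℝ)..1, ρ x * u x ^ 2 with hKKdef
  set JJ := ∫ x in (0:ℝ)..1, |f x * f' x| with hJJdef
  -- integrabilities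
  have h_f2 : IntervalIntegrable (fun x => f x ^ 2) volume 0 1 :=
    (hfc.pow 2).intervalIntegrable 0 1
  have h_ff' : IntervalIntegrable (fun x => |f x * f' x|) volume 0 1 :=
    ((hfc.mul hf'cont).abs).intervalIntegrable 0 1
  have h_ρu2f2 : IntervalIntegrable (fun x => ρ x * u x ^ 2 * f x ^ 2) volume 0 1 :=
    huL2.mul_continuousOn ((hfc.pow 2)).continuousOn
  -- nonnegativity
  have hD0 : 0 ≤ DD := by
    apply intervalIntegral.integral_nonneg_of_ae_restrict h01
    filter_upwards [hρIcc] with x hx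
    obtain ⟨h1, _⟩ := hx
    positivity
  have hF0 : 0 ≤ FF :=
    intervalIntegral.integral_nonneg h01 (fun x _ => sq_nonneg _)
  have hJ0 : 0 ≤ JJ :=
    intervalIntegral.integral_nonneg h01 (fun x _ => abs_nonneg _)
  have hK0 : 0 ≤ KK := by
    apply intervalIntegral.integral_nonneg_of_ae_restrict h01
    filter_upwards [hρIcc] with x hx
    obtain ⟨h1, _⟩ := hx
    positivity
  have hKE : KK ≤ 2 * E := by
    have hhalf : (∫ x in (0:ℝ)..1, ρ x * u x ^ 2 / 2) = KK / 2 := by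
      rw [hKKdef, ← intervalIntegral.integral_div]
    rw [hhalf] at hE
    linarith
  have hE0 : 0 ≤ E := by linarith
  -- sup bound
  have hsup : ∀ x ∈ Set.Icc (0:ℝ) 1, f x ^ 2 ≤ FF + 2 * JJ := by
    obtain ⟨y, hy, hymin⟩ := isCompact_Icc.exists_isMinOn (Set.nonempty_Icc.mpr h01)
      ((hfc.pow 2).continuousOn : ContinuousOn (fun x => f x ^ 2) (Set.Icc 0 1))
    have hgy : f y ^ 2 ≤ FF := by
      have h1 : (∫ _x in (0:ℝ)..1, f y ^ 2) = f y ^ 2 := by simp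
      rw [← h1]
      exact intervalIntegral.integral_mono_on h01 (intervalIntegrable_const) h_f2
        (fun x hx => hymin hx)
    intro x hx
    have hderiv2 : ∀ z ∈ Set.uIcc y x, HasDerivAt (fun w => f w ^ 2) (2 * f z * f' z) z := by
      intro z _
      have := (hderiv z).fun_pow 2
      simpa using this
    have hftc : (∫ t in y..x, 2 * f t * f' t) = f x ^ 2 - f y ^ 2 :=
      intervalIntegral.integral_eq_sub_of_hasDerivAt hderiv2
        (((continuous_const.mul hfc).mul hf'cont).intervalIntegrable y x)
    have habs : |∫ t in y..x, 2 * f t * f' t| ≤ 2 * JJ := by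
      have h2J : (∫ t in (0:ℝ)..1, |2 * f t * f' t|) = 2 * JJ := by
        rw [hJJdef, ← intervalIntegral.integral_const_mul]
        apply intervalIntegral.integral_congr
        intro t _
        simp [abs_mul, abs_two, mul_assoc]
      have hnn := intervalIntegral.norm_integral_le_abs_integral_norm (μ := volume)
        (a := y) (b := x) (f := fun t => 2 * f t * f' t)
      simp only [Real.norm_eq_abs] at hnn
      have key : |(∫ t in y..x, |2 * f t * f' t|)| ≤ |(∫ t in (0:ℝ)..1, |2 * f t * f' t|)| := by
        apply intervalIntegral.abs_integral_mono_interval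
        · rw [Set.uIoc_of_le h01]
          rcases le_total y x with h | h
          · rw [Set.uIoc_of_le h]
            exact Set.Ioc_subset_Ioc hy.1 hx.2
          · rw [Set.uIoc_of_ge h]
            exact Set.Ioc_subset_Ioc hx.1 hy.2
        · exact Filter.Eventually.of_forall (fun t => abs_nonneg _)
        · exact ((continuous_const.mul hfc).mul hf'cont).abs.intervalIntegrable 0 1
      have hfin : |(∫ t in (0:ℝ)..1, |2 * f t * f' t|)| = 2 * JJ := by
        rw [abs_of_nonneg (intervalIntegral.integral_nonneg h01 (fun t _ => abs_nonneg _))]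
        exact h2J
      calc |∫ t in y..x, 2 * f t * f' t| ≤ |(∫ t in y..x, |2 * f t * f' t|)| := hnn
        _ ≤ |(∫ t in (0:ℝ)..1, |2 * f t * f' t|)| := key
        _ = 2 * JJ := hfin
    rw [hftc] at habs
    have h5 := abs_le.mp habs
    linarith [h5.2]
  -- step 1: main AM-GM estimate
  have hA : (∫ x in (0:ℝ)..1, |u x * f x * f' x|)
      ≤ η / 2 * DD + 1 / (2 * η) * ((FF + 2 * JJ) * KK) := by
    have hmono : (∫ x in (0:ℝ)..1, |u x * f x * f' x|)
        ≤ ∫ x in (0:ℝ)..1,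
            (η / 2 * (f' x ^ 2 / ρ x) + 1 / (2 * η) * (ρ x * u x ^ 2 * f x ^ 2)) := by
      apply intervalIntegral.integral_mono_ae_restrict h01 hint1
        ((hint2.const_mul _).add (h_ρu2f2.const_mul _))
      filter_upwards [hρIcc] with x hx
      obtain ⟨h1, _⟩ := hx
      calc |u x * f x * f' x| = |f' x * (u x * f x)| := by
            rw [show u x * f x * f' x = f' x * (u x * f x) from by ring]
        _ ≤ η / 2 * (f' x ^ 2 / ρ x) + 1 / (2 * η) * (ρ x * (u x * f x) ^ 2) :=
            amgm4 _ _ _ _ h1 hη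
        _ = η / 2 * (f' x ^ 2 / ρ x) + 1 / (2 * η) * (ρ x * u x ^ 2 * f x ^ 2) := by ring
    have hsplit : (∫ x in (0:ℝ)..1,
          (η / 2 * (f' x ^ 2 / ρ x) + 1 / (2 * η) * (ρ x * u x ^ 2 * f x ^ 2)))
        = η / 2 * DD + 1 / (2 * η) * ∫ x in (0:ℝ)..1, ρ x * u x ^ 2 * f x ^ 2 := by
      rw [intervalIntegral.integral_add (hint2.const_mul _) (h_ρu2f2.const_mul _),
        intervalIntegral.integral_const_mul, intervalIntegral.integral_const_mul]
    have hbd : (∫ x in (0:ℝ)..1, ρ x * u x ^ 2 * f x ^ 2) ≤ (FF + 2 * JJ) * KK := by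
      have hm : (∫ x in (0:ℝ)..1, ρ x * u x ^ 2 * f x ^ 2)
          ≤ ∫ x in (0:ℝ)..1, (FF + 2 * JJ) * (ρ x * u x ^ 2) := by
        apply intervalIntegral.integral_mono_ae_restrict h01 h_ρu2f2 (huL2.const_mul _)
        filter_upwards [hρIcc, ae_restrict_mem measurableSet_Icc] with x hx hmem
        obtain ⟨h1, _⟩ := hx
        have hb := hsup x hmem
        have h0 : 0 ≤ ρ x * u x ^ 2 := by positivity
        calc ρ x * u x ^ 2 * f x ^ 2 ≤ ρ x * u x ^ 2 * (FF + 2 * JJ) :=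
              mul_le_mul_of_nonneg_left hb h0
          _ = (FF + 2 * JJ) * (ρ x * u x ^ 2) := by ring
      rwa [intervalIntegral.integral_const_mul] at hm
    calc (∫ x in (0:ℝ)..1, |u x * f x * f' x|)
        ≤ ∫ x in (0:ℝ)..1,
            (η / 2 * (f' x ^ 2 / ρ x) + 1 / (2 * η) * (ρ x * u x ^ 2 * f x ^ 2)) := hmono
      _ = η / 2 * DD + 1 / (2 * η) * ∫ x in (0:ℝ)..1, ρ x * u x ^ 2 * f x ^ 2 := hsplit
      _ ≤ η / 2 * DD + 1 / (2 * η) * ((FF + 2 * JJ) * KK) := by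
          have := mul_le_mul_of_nonneg_left hbd (by positivity : (0:ℝ) ≤ 1 / (2 * η))
          linarith
  -- conclude
  rcases hE0.eq_or_lt with hEeq | hEpos
  · -- E = 0
    have hKK0 : KK = 0 := le_antisymm (by linarith) hK0
    rw [← hEeq]
    have hz : (0:ℝ) / η + 54 * ρbar * 0 ^ 2 / η ^ 3 = 0 := by
      simp
    rw [hz, zero_mul, add_zero]
    rw [hKK0, mul_zero, mul_zero, add_zero] at hA
    calc (∫ x in (0:ℝ)..1, |u x * f x * f' x|) ≤ η / 2 * DD := hA
      _ ≤ η * DD := by nlinarith [mul_nonneg (le_of_lt hη) hD0]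
  · -- E > 0
    have hEne : E ≠ 0 := ne_of_gt hEpos
    have hηne : η ≠ 0 := ne_of_gt hη
    set t := η ^ 2 / (2 * E) with htdef
    have ht : 0 < t := by positivity
    have hB : JJ ≤ t / 2 * DD + ρbar / (2 * t) * FF := by
      have hmono : JJ ≤ ∫ x in (0:ℝ)..1,
          (t / 2 * (f' x ^ 2 / ρ x) + ρbar / (2 * t) * f x ^ 2) := by
        apply intervalIntegral.integral_mono_ae_restrict h01 h_ff'
          ((hint2.const_mul _).add (h_f2.const_mul _))
        filter_upwards [hρIcc] with x hx
        obtain ⟨h1, h2⟩ := hx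
        have h3 := amgm4 (f' x) (f x) (ρ x) t h1 ht
        have h4 : 1 / (2 * t) * (ρ x * f x ^ 2) ≤ ρbar / (2 * t) * f x ^ 2 := by
          have h5 : ρ x * f x ^ 2 ≤ ρbar * f x ^ 2 :=
            mul_le_mul_of_nonneg_right h2 (sq_nonneg _)
          calc 1 / (2 * t) * (ρ x * f x ^ 2) ≤ 1 / (2 * t) * (ρbar * f x ^ 2) :=
                mul_le_mul_of_nonneg_left h5 (by positivity)
            _ = ρbar / (2 * t) * f x ^ 2 := by ring
        calc |f x * f' x| = |f' x * f x| := by rw [mul_comm]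
          _ ≤ t / 2 * (f' x ^ 2 / ρ x) + 1 / (2 * t) * (ρ x * f x ^ 2) := h3
          _ ≤ t / 2 * (f' x ^ 2 / ρ x) + ρbar / (2 * t) * f x ^ 2 := by linarith
      rwa [intervalIntegral.integral_add (hint2.const_mul _) (h_f2.const_mul _),
        intervalIntegral.integral_const_mul, intervalIntegral.integral_const_mul] at hmono
    have h1 : 1 / (2 * η) * ((FF + 2 * JJ) * KK)
        ≤ 1 / (2 * η) * ((FF + 2 * JJ) * (2 * E)) :=
      mul_le_mul_of_nonneg_left
        (mul_le_mul_of_nonneg_left hKE (by linarith)) (by positivity)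
    have h2 : 1 / (2 * η) * ((FF + 2 * JJ) * (2 * E)) = E / η * FF + 2 * E / η * JJ := by
      field_simp
    have h3 : 2 * E / η * JJ ≤ 2 * E / η * (t / 2 * DD + ρbar / (2 * t) * FF) :=
      mul_le_mul_of_nonneg_left hB (by positivity)
    have h4 : 2 * E / η * (t / 2 * DD + ρbar / (2 * t) * FF)
        = η / 2 * DD + 2 * ρbar * E ^ 2 / η ^ 3 * FF := by
      rw [htdef]; field_simp
    rw [h2] at h1
    rw [h4] at h3
    have hfin : 2 * ρbar * E ^ 2 / η ^ 3 * FF ≤ 54 * ρbar * E ^ 2 / η ^ 3 * FF := by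
      apply mul_le_mul_of_nonneg_right _ hF0
      have hpos : 0 ≤ ρbar * E ^ 2 / η ^ 3 := by positivity
      calc 2 * ρbar * E ^ 2 / η ^ 3 = 2 * (ρbar * E ^ 2 / η ^ 3) := by ring
        _ ≤ 54 * (ρbar * E ^ 2 / η ^ 3) := by linarith
        _ = 54 * ρbar * E ^ 2 / η ^ 3 := by ring
    calc (∫ x in (0:ℝ)..1, |u x * f x * f' x|)
        ≤ η / 2 * DD + 1 / (2 * η) * ((FF + 2 * JJ) * KK) := hA
      _ ≤ η / 2 * DD + (E / η * FF + 2 * E / η * JJ) := by linarith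
      _ ≤ η / 2 * DD + (E / η * FF + (η / 2 * DD + 2 * ρbar * E ^ 2 / η ^ 3 * FF)) := by
          linarith
      _ ≤ η * DD + (E / η * FF + 54 * ρbar * E ^ 2 / η ^ 3 * FF) := by linarith
      _ = η * DD + (E / η + 54 * ρbar * E ^ 2 / η ^ 3) * FF := by ring
end
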